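/- Let h be a symmetric bilinear form on V and, for t ∈ ℝ near 0, let g_t = g + t·h (positive definite for small t) and let c_{g_t} denote the contraction operator associated to g_t. Then the derivative at t = 0 of the curve of (1,1) double forms t ↦ c_{g_t}(g·g) equals 2·(h − (tr_g h)·g), where tr_g h = c_g h. -/

import Mathlib

/-- Double forms on the inner product space `ℝⁿ` (with its standard inner product `g`),
described by their components with respect to the standard orthonormal basis: the component
at bidegree `(p, q)` is a real-valued function of `p` "row" indices and `q` "column" indices
(an element of `Λᵖ(ℝⁿ)* ⊗ Λ^q(ℝⁿ)*` is exactly such a component function which is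
antisymmetric in each group of indices). -/
abbrev DoubleForm (n : ℕ) : Type :=
  ∀ p q : ℕ, (Fin p → Fin n) → (Fin q → Fin n) → ℝ

/-- `ω` is a double form of bidegree `(p, q)`: it is concentrated at `(p, q)` and is
antisymmetric in each group of arguments. -/
def dfHasBidegree (n p q : ℕ) (ω : DoubleForm n) : Prop :=
  (∀ p' q', ¬(p' = p ∧ q' = q) → ω p' q' = 0) ∧
  (∀ (σ : Equiv.Perm (Fin p)) (x : Fin p → Fin n) (y : Fin q → Fin n),
      ω p q (x ∘ σ) y = ((Equiv.Perm.sign σ : ℤ) : ℝ) * ω p q x y) ∧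
  (∀ (τ : Equiv.Perm (Fin q)) (x : Fin p → Fin n) (y : Fin q → Fin n),
      ω p q x (y ∘ τ) = ((Equiv.Perm.sign τ : ℤ) : ℝ) * ω p q x y)

/-- The unit double form (the constant `1` in bidegree `(0,0)`). -/
noncomputable def dfOne (n : ℕ) : DoubleForm n
  | 0, 0, _, _ => 1
  | _, _, _, _ => 0

/-- The metric `g` (the standard inner product) as a `(1,1)` double form. -/
noncomputable def dfG (n : ℕ) : DoubleForm n
  | 1, 1, x, y => if x 0 = y 0 then 1 else 0
  | _, _, _, _ => 0

/-- The product of double forms: the wedge product (determinant convention) on each of the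
two tensor factors, with no extra sign (so that `(θ₁⊗θ₂)·(θ₃⊗θ₄) = (θ₁∧θ₃)⊗(θ₂∧θ₄)`). -/
noncomputable def dfMul (n : ℕ) (ω θ : DoubleForm n) : DoubleForm n :=
  fun p q x y =>
    ∑ p₁ : Fin (p + 1), ∑ q₁ : Fin (q + 1),
      (((p₁ : ℕ).factorial * (p - (p₁ : ℕ)).factorial *
          (q₁ : ℕ).factorial * (q - (q₁ : ℕ)).factorial : ℕ) : ℝ)⁻¹ *
        ∑ σ : Equiv.Perm (Fin p), ∑ τ : Equiv.Perm (Fin q),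
          ((Equiv.Perm.sign σ : ℤ) : ℝ) * ((Equiv.Perm.sign τ : ℤ) : ℝ) *
            (ω (p₁ : ℕ) (q₁ : ℕ)
               (fun i => x (σ (Fin.castLE (Nat.lt_succ_iff.mp p₁.isLt) i)))
               (fun j => y (τ (Fin.castLE (Nat.lt_succ_iff.mp q₁.isLt) j))) *
             θ (p - (p₁ : ℕ)) (q - (q₁ : ℕ))
               (fun i => x (σ ⟨(p₁ : ℕ) + (i : ℕ), by
                  have h1 := i.isLt; have h2 := p₁.isLt; omega⟩))
               (fun j => y (τ ⟨(q₁ : ℕ) + (j : ℕ), by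
                  have h1 := j.isLt; have h2 := q₁.isLt; omega⟩)))

/-- Powers of a double form with respect to the product `dfMul`. -/
noncomputable def dfPow (n : ℕ) (ω : DoubleForm n) : ℕ → DoubleForm n
  | 0 => dfOne n
  | m + 1 => dfMul n (dfPow n ω m) ω

/-- The contraction `c_g` with respect to the standard inner product: it maps the
`(p+1, q+1)` component to the `(p, q)` component by tracing over a pair of slots
(and is zero on bidegrees `(p, 0)` and `(0, q)`). -/
noncomputable def dfContr (n : ℕ) (ω : DoubleForm n) : DoubleForm n :=
  fun p q x y => ∑ i : Fin n, ω (p + 1) (q + 1) (Fin.cons i x) (Fin.cons i y)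

/-- The natural inner product, at bidegree `(p, q)`, induced by `g` on double forms
(for which the monomials with strictly increasing indices are orthonormal). -/
noncomputable def dfInner (n p q : ℕ) (ω θ : DoubleForm n) : ℝ :=
  ((p.factorial * q.factorial : ℕ) : ℝ)⁻¹ *
    ∑ x : Fin p → Fin n, ∑ y : Fin q → Fin n, ω p q x y * θ p q x y

/-- For a bilinear form `h` on `ℝⁿ` (given by its component matrix), the operator `F_h`,
inserting the `g`-symmetric endomorphism `H` associated to `h` into each slot in turn. -/
noncomputable def dfF (n : ℕ) (h : Fin n → Fin n → ℝ) (ω : DoubleForm n) : DoubleForm n :=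
  fun p q x y =>
    (∑ k : Fin p, ∑ i : Fin n, h (x k) i * ω p q (Function.update x k i) y) +
    (∑ k : Fin q, ∑ i : Fin n, h (y k) i * ω p q x (Function.update y k i))

/-- A bilinear form on `ℝⁿ` (given by its component matrix) as a `(1,1)` double form. -/
noncomputable def dfOfMatrix (n : ℕ) (h : Fin n → Fin n → ℝ) : DoubleForm n
  | 1, 1, x, y => h (x 0) (y 0)
  | _, _, _, _ => 0

/-- The component matrix of the `(1,1)` part of a double form. -/
noncomputable def dfMat (n : ℕ) (ω : DoubleForm n) : Fin n → Fin n → ℝ :=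
  fun i j => ω 1 1 (fun _ => i) (fun _ => j)

/-- `R ∈ C²`: a `(2,2)` double form satisfying the symmetry
`R(x₁∧x₂ ⊗ y₁∧y₂) = R(y₁∧y₂ ⊗ x₁∧x₂)`. -/
def dfIsC2 (n : ℕ) (R : DoubleForm n) : Prop :=
  dfHasBidegree n 2 2 R ∧ ∀ x y : Fin 2 → Fin n, R 2 2 x y = R 2 2 y x

/-- The operator `𝔑_R` : `(𝔑_R h)(v, w) = Σᵢ h(R(v, eᵢ)w, eᵢ)`, where the `(3,1)`-tensor of
`R` is determined by `g(R(x,y)z, u) = R(x∧y ⊗ z∧u)`. -/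
noncomputable def curvAction (n : ℕ) (R : DoubleForm n) (h : Fin n → Fin n → ℝ) :
    Fin n → Fin n → ℝ :=
  fun v w => ∑ i : Fin n, ∑ u : Fin n, R 2 2 ![v, i] ![w, u] * h u i

/-- The contraction associated to an arbitrary metric on `ℝⁿ` whose Gram matrix in the
standard basis is `G`: `c_{g'} ω = Σᵢⱼ (G⁻¹)ᵢⱼ ω(vᵢ∧… ⊗ vⱼ∧…)`. -/
noncomputable def dfContrM (n : ℕ) (G : Matrix (Fin n) (Fin n) ℝ) (ω : DoubleForm n) :
    DoubleForm n :=
  fun p q x y => ∑ i : Fin n, ∑ j : Fin n,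
    (G⁻¹) i j * ω (p + 1) (q + 1) (Fin.cons i x) (Fin.cons j y)


section aux

attribute [local instance] Matrix.linftyOpNormedAddCommGroup Matrix.linftyOpNormedRing
  Matrix.linftyOpNormedAlgebra

private lemma sum_perm_two' (f : Equiv.Perm (Fin 2) → ℝ) :
    ∑ σ : Equiv.Perm (Fin 2), f σ = f 1 + f (Equiv.swap 0 1) := by
  have : (Finset.univ : Finset (Equiv.Perm (Fin 2))) = {1, Equiv.swap 0 1} := by decide
  rw [this, Finset.sum_insert (by decide), Finset.sum_singleton]

private lemma dfG0' {n q : ℕ} (x : Fin 0 → Fin n) (y : Fin q → Fin n) : dfG n 0 q x y = 0 := rfl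
private lemma L2 {n q : ℕ} (x : Fin (0+1+1) → Fin n) (y : Fin q → Fin n) : dfG n (0+1+1) q x y = 0 := rfl
private lemma L3 {n : ℕ} (x : Fin (0+1) → Fin n) (y : Fin 0 → Fin n) : dfG n (0+1) 0 x y = 0 := rfl
private lemma L4 {n : ℕ} (x : Fin (0+1) → Fin n) (y : Fin (0+1+1) → Fin n) : dfG n (0+1) (0+1+1) x y = 0 := rfl
private lemma L5 {n : ℕ} (x : Fin (0+1) → Fin n) (y : Fin (0+1) → Fin n) :
    dfG n (0+1) (0+1) x y = if x 0 = y 0 then 1 else 0 := rfl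
private lemma L6 {n q : ℕ} (x : Fin (2-(0+1+1)) → Fin n) (y : Fin q → Fin n) : dfG n (2-(0+1+1)) q x y = 0 := rfl
private lemma L7 {n q : ℕ} (x : Fin (2-0) → Fin n) (y : Fin q → Fin n) : dfG n (2-0) q x y = 0 := rfl
private lemma L8 {n : ℕ} (x : Fin (2-(0+1)) → Fin n) (y : Fin (2-(0+1+1)) → Fin n) :
    dfG n (2-(0+1)) (2-(0+1+1)) x y = 0 := rfl
private lemma L9 {n : ℕ} (x : Fin (2-(0+1)) → Fin n) (y : Fin (2-0) → Fin n) :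
    dfG n (2-(0+1)) (2-0) x y = 0 := rfl
private lemma L10 {n : ℕ} (x : Fin (2-(0+1)) → Fin n) (y : Fin (2-(0+1)) → Fin n) :
    dfG n (2-(0+1)) (2-(0+1)) x y = if x 0 = y 0 then 1 else 0 := rfl

private lemma dfMul_gg_key (n : ℕ) (x y : Fin 2 → Fin n) :
    dfMul n (dfG n) (dfG n) 2 2 x y =
      2 * ((if x 0 = y 0 then (1:ℝ) else 0) * (if x 1 = y 1 then 1 else 0)
        - (if x 0 = y 1 then 1 else 0) * (if x 1 = y 0 then 1 else 0)) := by
  rw [dfMul]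
  simp only [Fin.sum_univ_succ, Fin.sum_univ_zero, Fin.val_zero, Fin.val_succ,
    dfG0', L2, L3, L4, L5, L6, L7, L8, L9, L10, zero_mul, mul_zero, Finset.sum_const_zero,
    add_zero, zero_add]
  simp only [sum_perm_two']
  norm_num [Equiv.Perm.sign_swap, Equiv.swap_apply_left, Equiv.swap_apply_right]
  split_ifs <;> grind

private lemma inv_entry_deriv (n : ℕ) (h : Matrix (Fin n) (Fin n) ℝ) (i j : Fin n) :
    HasDerivAt (fun t : ℝ => ((1 + t • h)⁻¹ : Matrix (Fin n) (Fin n) ℝ) i j) (-(h i j)) 0 := by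
  have h1 : HasDerivAt (fun t : ℝ => (1 + t • h : Matrix (Fin n) (Fin n) ℝ)) h 0 := by
    have := ((hasDerivAt_id (0:ℝ)).smul_const h).const_add (1 : Matrix (Fin n) (Fin n) ℝ)
    simp only [id, one_smul] at this
    exact this
  have h2 : HasDerivAt (fun t : ℝ => Ring.inverse (1 + t • h : Matrix (Fin n) (Fin n) ℝ)) (-h) 0 := by
    have key : (1 + (0:ℝ) • h : Matrix (Fin n) (Fin n) ℝ)
        = ((1 : (Matrix (Fin n) (Fin n) ℝ)ˣ) : Matrix (Fin n) (Fin n) ℝ) := by simp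
    have hf := hasFDerivAt_ringInverse (𝕜 := ℝ) (1 : (Matrix (Fin n) (Fin n) ℝ)ˣ)
    rw [← key] at hf
    have := hf.comp_hasDerivAt 0 h1
    simp at this
    exact this
  have h3 : HasDerivAt (fun t : ℝ => ((1 + t • h)⁻¹ : Matrix (Fin n) (Fin n) ℝ)) (-h) 0 := by
    simpa only [Matrix.nonsing_inv_eq_ringInverse] using h2
  let e : Matrix (Fin n) (Fin n) ℝ →L[ℝ] ℝ :=
    (ContinuousLinearMap.proj j).comp
      (ContinuousLinearMap.proj (R := ℝ) (φ := fun _ : Fin n => Fin n → ℝ) i)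
  have := e.hasFDerivAt.comp_hasDerivAt 0 h3
  simp [e] at this
  exact this

end aux

/-- for a symmetric bilinear form `h` on `V` and `g_t = g + t·h` (positive
definite for small `t`), the derivative at `t = 0` of the curve of `(1,1)` double forms
`t ↦ c_{g_t}(g·g)` equals `2·(h − (tr_g h)·g)`. -/
theorem stmt_14 (n : ℕ) (h : Matrix (Fin n) (Fin n) ℝ) (hsym : ∀ i j, h i j = h j i)
    (v w : Fin n) :
    HasDerivAt
      (fun t : ℝ =>
        dfContrM n (1 + t • h) (dfMul n (dfG n) (dfG n)) 1 1 (fun _ => v) (fun _ => w))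
      (2 * (h v w - (∑ i : Fin n, h i i) * (if v = w then (1 : ℝ) else 0))) 0 := by
  have key' : ∀ (i j : Fin n),
      dfMul n (dfG n) (dfG n) (1+1) (1+1)
        (Fin.cons i (fun _ : Fin 1 => v)) (Fin.cons j (fun _ : Fin 1 => w)) =
      2 * ((if i = j then (1:ℝ) else 0) * (if v = w then 1 else 0)
        - (if i = w then 1 else 0) * (if v = j then 1 else 0)) := by
    intro i j
    have := dfMul_gg_key n (Fin.cons i (fun _ : Fin 1 => v)) (Fin.cons j (fun _ : Fin 1 => w))
    simpa [Fin.cons_zero, Fin.cons_one] using this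
  have hfun : (fun t : ℝ =>
      dfContrM n (1 + t • h) (dfMul n (dfG n) (dfG n)) 1 1 (fun _ => v) (fun _ => w))
      = fun t : ℝ => ∑ i : Fin n, ∑ j : Fin n, ((1 + t • h)⁻¹ : Matrix (Fin n) (Fin n) ℝ) i j *
          (2 * ((if i = j then (1:ℝ) else 0) * (if v = w then 1 else 0)
            - (if i = w then 1 else 0) * (if v = j then 1 else 0))) := by
    funext t
    rw [dfContrM]
    exact Finset.sum_congr rfl fun i _ => Finset.sum_congr rfl fun j _ => by rw [key']
  rw [hfun]
  have hder : HasDerivAt (fun t : ℝ =>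
      ∑ i : Fin n, ∑ j : Fin n, ((1 + t • h)⁻¹ : Matrix (Fin n) (Fin n) ℝ) i j *
          (2 * ((if i = j then (1:ℝ) else 0) * (if v = w then 1 else 0)
            - (if i = w then 1 else 0) * (if v = j then 1 else 0))))
      (∑ i : Fin n, ∑ j : Fin n, (-(h i j)) *
          (2 * ((if i = j then (1:ℝ) else 0) * (if v = w then 1 else 0)
            - (if i = w then 1 else 0) * (if v = j then 1 else 0)))) 0 := by
    apply HasDerivAt.fun_sum
    intro i _
    apply HasDerivAt.fun_sum
    intro j _
    exact (inv_entry_deriv n h i j).mul_const _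
  convert hder using 1
  have expand : ∀ i j : Fin n, (-(h i j)) *
      (2 * ((if i = j then (1:ℝ) else 0) * (if v = w then 1 else 0)
        - (if i = w then 1 else 0) * (if v = j then 1 else 0)))
      = (if j = i then -(2 * (if v = w then (1:ℝ) else 0)) * h i j else 0)
        + (if j = v then (if i = w then (2:ℝ) else 0) * h i j else 0) := by
    intro i j
    by_cases h1 : i = j <;> by_cases h2 : i = w <;> by_cases h3 : v = j <;>
      simp [h1, h2, h3, eq_comm] <;> split_ifs <;> simp_all <;> ring
  simp only [expand, Finset.sum_add_distrib, Finset.sum_ite_eq', Finset.mem_univ, if_true]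
  by_cases hvw : v = w
  · subst hvw
    simp [hsym v]
    rw [show ∑ x : Fin n, 2 * h x x = 2 * ∑ x : Fin n, h x x from (Finset.mul_sum _ _ _).symm]
    ring
  · simp [hvw, ite_mul, zero_mul, Finset.sum_ite_eq', hsym w v]
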